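/- With V(s, d^m) = W(s - (1/2)Σ_{r=1}^m d_r, d^m) as above, V satisfies the parity property V(s, d^m) = (-1)^{m+1} V(-s, d^m) for all s. In particular, if m is even then V(0, d^m) = 0; equivalently W(-ξ, d^m) = 0 where ξ = (1/2)Σ d_r (interpreting W as 0 at negative or non-integer arguments, this is consistent). -/

import Mathlib

/-- Restricted partition number: number of nonnegative integer solutions of
`∑ i, d i * x i = s`. -/
noncomputable def W {m : ℕ} (d : Fin m → ℕ) (s : ℤ) : ℕ :=
  Nat.card {x : Fin m → ℕ // ∑ i, (d i : ℤ) * (x i : ℤ) = s}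

section Wlemmas

variable {n : ℕ}

lemma sol_bound (d : Fin n → ℕ) (hd : ∀ i, 0 < d i) {s : ℤ} {x : Fin n → ℕ}
    (hx : ∑ i, (d i : ℤ) * (x i : ℤ) = s) (i : Fin n) : x i ≤ s.toNat := by
  have h1 : (x i : ℤ) ≤ (d i : ℤ) * x i :=
    le_mul_of_one_le_left (by positivity) (by exact_mod_cast hd i)
  have h2 : (d i : ℤ) * x i ≤ s := by
    rw [← hx]
    exact Finset.single_le_sum (f := fun j => (d j : ℤ) * (x j : ℤ))
      (fun j _ => by positivity) (Finset.mem_univ i)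
  have h3 : (x i : ℤ) ≤ s := h1.trans h2
  omega

lemma W_finite (d : Fin n → ℕ) (hd : ∀ i, 0 < d i) (s : ℤ) :
    Finite {x : Fin n → ℕ // ∑ i, (d i : ℤ) * (x i : ℤ) = s} := by
  have hb : ∀ (x : {x : Fin n → ℕ // ∑ i, (d i : ℤ) * (x i : ℤ) = s}) (i : Fin n),
      x.1 i < s.toNat + 1 := fun x i => Nat.lt_succ_of_le (sol_bound d hd x.2 i)
  exact Finite.of_injective
    (fun x => (fun i => (⟨x.1 i, hb x i⟩ : Fin (s.toNat + 1)) : Fin n → Fin (s.toNat + 1)))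
    (by
      intro a b h
      apply Subtype.ext; funext i
      exact congrArg Fin.val (congrFun h i))

lemma W_neg (d : Fin n → ℕ) {s : ℤ} (hs : s < 0) : W d s = 0 := by
  have : IsEmpty {x : Fin n → ℕ // ∑ i, (d i : ℤ) * (x i : ℤ) = s} := ⟨fun x => by
    have h0 : (0 : ℤ) ≤ s := by
      rw [← x.2]; exact Finset.sum_nonneg fun i _ => by positivity
    omega⟩
  exact Nat.card_of_isEmpty

lemma W_one (d : Fin 1 → ℕ) (hd : ∀ i, 0 < d i) (s : ℤ) :
    W d s = if (d 0 : ℤ) ∣ s ∧ 0 ≤ s then 1 else 0 := by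
  have hsum : ∀ x : Fin 1 → ℕ, ∑ i, (d i : ℤ) * (x i : ℤ) = (d 0 : ℤ) * (x 0 : ℤ) := by
    intro x; simp [Fin.sum_univ_one]
  by_cases h : (d 0 : ℤ) ∣ s ∧ 0 ≤ s
  · obtain ⟨⟨k, hk⟩, hs⟩ := h
    have hk0 : 0 ≤ k := by
      have := hd 0; nlinarith [hk]
    have huniq : Nat.card {x : Fin 1 → ℕ // ∑ i, (d i : ℤ) * (x i : ℤ) = s} = 1 := by
      rw [Nat.card_eq_one_iff_unique]
      constructor
      · constructor
        intro a b
        apply Subtype.ext; funext i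
        have ha := a.2; have hb := b.2
        rw [hsum] at ha hb
        have hi : i = 0 := Subsingleton.elim _ _
        subst hi
        have : (a.1 0 : ℤ) = (b.1 0 : ℤ) := by
          have hd0 : (0:ℤ) < (d 0 : ℤ) := by exact_mod_cast hd 0
          have := ha.trans hb.symm
          exact mul_left_cancel₀ (ne_of_gt hd0) this
        exact_mod_cast this
      · refine ⟨⟨fun _ => k.toNat, ?_⟩⟩
        rw [hsum]
        have : ((k.toNat : ℤ)) = k := Int.toNat_of_nonneg hk0
        rw [this, ← hk]
    rw [if_pos (⟨⟨k, hk⟩, hs⟩ : (d 0 : ℤ) ∣ s ∧ 0 ≤ s)]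
    exact huniq
  · have hempty : IsEmpty {x : Fin 1 → ℕ // ∑ i, (d i : ℤ) * (x i : ℤ) = s} := ⟨fun x => by
      have hx := x.2
      rw [hsum] at hx
      apply h
      constructor
      · exact ⟨x.1 0, hx.symm⟩
      · rw [← hx]; positivity⟩
    rw [if_neg h]
    exact @Nat.card_of_isEmpty _ hempty

end Wlemmas
open Classical in
lemma W_rec {n : ℕ} (d : Fin (n + 1) → ℕ) (hd : ∀ i, 0 < d i) (s : ℤ) :
    W d s = W (d ∘ Fin.castSucc) s + W d (s - d (Fin.last n)) := by
  classical
  set D := d (Fin.last n) with hD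
  -- sum splitting helper
  have hsplit : ∀ x : Fin (n + 1) → ℕ, ∑ i, (d i : ℤ) * (x i : ℤ) =
      (∑ i : Fin n, (d i.castSucc : ℤ) * (x i.castSucc : ℤ)) + (D : ℤ) * (x (Fin.last n) : ℤ) :=
    fun x => Fin.sum_univ_castSucc (f := fun i => (d i : ℤ) * (x i : ℤ))
  set S := {x : Fin (n + 1) → ℕ // ∑ i, (d i : ℤ) * (x i : ℤ) = s} with hS
  set S' := {y : Fin n → ℕ // ∑ i, ((d ∘ Fin.castSucc) i : ℤ) * (y i : ℤ) = s} with hS'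
  set S₂ := {x : Fin (n + 1) → ℕ // ∑ i, (d i : ℤ) * (x i : ℤ) = s - (D : ℤ)} with hS₂
  -- E1 : {x : S // x.1 (last) = 0} ≃ S'
  have E1 : {x : S // x.1 (Fin.last n) = 0} ≃ S' := by
    refine ⟨fun x => ⟨x.1.1 ∘ Fin.castSucc, ?_⟩,
            fun y => ⟨⟨Fin.snoc y.1 0, ?_⟩, ?_⟩, ?_, ?_⟩
    · have := x.1.2
      rw [hsplit x.1.1, x.2] at this
      simpa using this
    · rw [hsplit]
      simp [Fin.snoc_castSucc, Fin.snoc_last]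
      have := y.2
      simpa using this
    · simp [Fin.snoc_last]
    · intro x
      apply Subtype.ext; apply Subtype.ext; funext i
      refine Fin.lastCases ?_ ?_ i
      · simp [Fin.snoc_last, x.2.symm]
      · intro j; simp [Fin.snoc_castSucc]
    · intro y
      apply Subtype.ext; funext i
      simp [Fin.snoc_castSucc]
  -- E2 : {x : S // x.1 last ≠ 0} ≃ S₂
  have key : ∀ (x : Fin (n+1) → ℕ) (a : ℕ), ∑ i, (d i : ℤ) * ((Function.update x (Fin.last n) a) i : ℤ)
      = (∑ i : Fin n, (d i.castSucc : ℤ) * (x i.castSucc : ℤ)) + (D : ℤ) * (a : ℤ) := by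
    intro x a
    rw [hsplit]
    simp only [Function.update_self]
    congr 1
    apply Finset.sum_congr rfl
    intro i _
    rw [Function.update_of_ne (by exact (Fin.castSucc_lt_last i).ne)]
  have E2 : {x : S // x.1 (Fin.last n) ≠ 0} ≃ S₂ := by
    refine ⟨fun x => ⟨Function.update x.1.1 (Fin.last n) (x.1.1 (Fin.last n) - 1), ?_⟩,
            fun z => ⟨⟨Function.update z.1 (Fin.last n) (z.1 (Fin.last n) + 1), ?_⟩, ?_⟩, ?_, ?_⟩
    · rw [key]
      have hx := x.1.2
      rw [hsplit x.1.1] at hx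
      have hpos : 1 ≤ x.1.1 (Fin.last n) := Nat.one_le_iff_ne_zero.mpr x.2
      have : ((x.1.1 (Fin.last n) - 1 : ℕ) : ℤ) = (x.1.1 (Fin.last n) : ℤ) - 1 := by
        omega
      rw [this]
      linarith [hx]
    · rw [key]
      have hz := z.2
      rw [hsplit z.1] at hz
      push_cast
      linarith [hz]
    · simp
    · intro x
      apply Subtype.ext; apply Subtype.ext; funext i
      by_cases hi : i = Fin.last n
      · subst hi
        simp only [Function.update_self]
        have hpos : 1 ≤ x.1.1 (Fin.last n) := Nat.one_le_iff_ne_zero.mpr x.2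
        omega
      · simp [Function.update_of_ne hi]
    · intro z
      apply Subtype.ext; funext i
      by_cases hi : i = Fin.last n
      · subst hi; simp
      · simp [Function.update_of_ne hi]
  have E0 : S ≃ {x : S // x.1 (Fin.last n) = 0} ⊕ {x : S // x.1 (Fin.last n) ≠ 0} :=
    (Equiv.sumCompl (fun x : S => x.1 (Fin.last n) = 0)).symm
  have E : S ≃ S' ⊕ S₂ := E0.trans (Equiv.sumCongr E1 E2)
  have h1 : Finite S' := W_finite _ (fun i => hd _) s
  have h2 : Finite S₂ := W_finite _ hd _
  show Nat.card S = Nat.card S' + Nat.card S₂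
  rw [Nat.card_congr E, Nat.card_sum]
/-- `f` is a quasi-polynomial with period `L`. -/
def IsQP (L : ℤ) (f : ℤ → ℚ) : Prop :=
  ∀ r : ℤ, ∃ p : Polynomial ℚ, ∀ s : ℤ, s ≡ r [ZMOD L] → f s = p.eval (s : ℚ)

lemma IsQP.of_dvd {L M : ℤ} {f : ℤ → ℚ} (h : IsQP L f) (hLM : L ∣ M) : IsQP M f := by
  intro r
  obtain ⟨p, hp⟩ := h r
  exact ⟨p, fun s hs => hp s (hs.of_dvd hLM)⟩

lemma IsQP.sub {L : ℤ} {f g : ℤ → ℚ} (hf : IsQP L f) (hg : IsQP L g) :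
    IsQP L (fun s => f s - g s) := by
  intro r
  obtain ⟨p, hp⟩ := hf r
  obtain ⟨q, hq⟩ := hg r
  exact ⟨p - q, fun s hs => by simp [hp s hs, hq s hs]⟩

lemma IsQP.shift {L : ℤ} {f : ℤ → ℚ} (hf : IsQP L f) (a : ℤ) :
    IsQP L (fun s => f (s - a)) := by
  intro r
  obtain ⟨p, hp⟩ := hf (r - a)
  refine ⟨p.comp (Polynomial.X - Polynomial.C (a : ℚ)), fun s hs => ?_⟩
  rw [Polynomial.eval_comp]
  simp only [Polynomial.eval_sub, Polynomial.eval_X, Polynomial.eval_C]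
  have := hp (s - a) (hs.sub_right a)
  rw [this]
  push_cast
  ring_nf

/-- rigidity: a quasi-polynomial with positive period vanishing for large arguments is zero -/
lemma IsQP.eq_zero {L : ℤ} (hL : 0 < L) {f : ℤ → ℚ} (hf : IsQP L f) {N : ℤ}
    (h : ∀ s, N ≤ s → f s = 0) : ∀ s, f s = 0 := by
  intro s₀
  obtain ⟨p, hp⟩ := hf s₀
  have hp0 : p = 0 := by
    apply Polynomial.eq_zero_of_infinite_isRoot
    refine Set.infinite_of_injective_forall_mem
      (f := fun k : ℕ => ((s₀ + ((N - s₀).toNat + k) * L : ℤ) : ℚ)) ?_ ?_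
    · intro a b hab
      have h1 : (s₀ + (((N - s₀).toNat + a : ℕ) : ℤ) * L) = s₀ + (((N - s₀).toNat + b : ℕ) : ℤ) * L := by
        have hab2 : ((s₀ + (((N - s₀).toNat + a : ℕ) : ℤ) * L : ℤ) : ℚ)
            = ((s₀ + (((N - s₀).toNat + b : ℕ) : ℤ) * L : ℤ) : ℚ) := hab
        exact_mod_cast hab2
      push_cast at h1
      have h2 : ((a : ℤ)) * L = b * L := by linarith
      have h3 : (a : ℤ) = b := mul_right_cancel₀ (ne_of_gt hL) h2
      exact_mod_cast h3
    · intro k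
      show ((s₀ + (((N - s₀).toNat + k : ℕ) : ℤ) * L : ℤ) : ℚ) ∈ _
      set t : ℤ := (((N - s₀).toNat + k : ℕ) : ℤ) with ht
      have hcong : (s₀ + t * L) ≡ s₀ [ZMOD L] := by
        have hdvd : (L : ℤ) ∣ s₀ - (s₀ + t * L) := ⟨-t, by ring⟩
        exact Int.modEq_iff_dvd.mpr hdvd
      have ht0 : 0 ≤ t := by positivity
      have hge : N ≤ s₀ + t * L := by
        have h1 : N - s₀ ≤ t := by
          have : N - s₀ ≤ ((N - s₀).toNat : ℤ) := Int.self_le_toNat _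
          omega
        have h2 : t ≤ t * L := le_mul_of_one_le_right ht0 hL
        omega
      have hz : f (s₀ + t * L) = 0 := h _ hge
      have heval := hp (s₀ + t * L) hcong
      simp only [Set.mem_setOf_eq, Polynomial.IsRoot]
      rw [← heval, hz]
  rw [hp s₀ (Int.ModEq.refl _), hp0]
  simp

lemma isQP_of_data {L : ℤ} {f : ℤ → ℚ} {m : ℕ} (c : Fin m → ℤ → ℚ)
    (hper : ∀ j s, c j (s + L) = c j s)
    (hpoly : ∀ s, f s = ∑ j, c j s * (s : ℚ) ^ (j : ℕ)) : IsQP L f := by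
  have hper' : ∀ (j : Fin m) (s : ℤ) (k : ℤ), c j (s + k * L) = c j s := by
    intro j s k
    induction k using Int.induction_on with
    | zero => simp
    | succ k ih =>
        have h1 : s + (k + 1 : ℤ) * L = (s + k * L) + L := by ring
        rw [h1, hper, ih]
    | pred k ih =>
        have h1 : s + (-k : ℤ) * L = (s + (-k - 1) * L) + L := by ring
        rw [h1] at ih
        rw [hper] at ih
        rw [← ih]
  intro r
  refine ⟨∑ j : Fin m, Polynomial.C (c j r) * Polynomial.X ^ (j : ℕ), fun s hs => ?_⟩
  obtain ⟨t, ht⟩ : ∃ t : ℤ, s = r + t * L := by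
    obtain ⟨u, hu⟩ := hs.symm.dvd
    exact ⟨u, by linarith [hu]⟩
  rw [hpoly]
  rw [Polynomial.eval_finset_sum]
  apply Finset.sum_congr rfl
  intro j _
  simp only [Polynomial.eval_mul, Polynomial.eval_C, Polynomial.eval_pow, Polynomial.eval_X]
  congr 1
  rw [ht, hper']

lemma isQP_indicator (D : ℤ) : IsQP D (fun s => if D ∣ s then (1 : ℚ) else 0) := by
  intro r
  refine ⟨Polynomial.C (if D ∣ r then (1 : ℚ) else 0), fun s hs => ?_⟩
  have hiff : D ∣ s ↔ D ∣ r := by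
    have hdvd : D ∣ r - s := hs.dvd
    constructor
    · intro h; have := dvd_add h hdvd; simpa using this
    · intro h; have := dvd_sub h hdvd; simpa using this
  simp only [hiff]
  split <;> simp

lemma key : ∀ (n : ℕ), 1 ≤ n → ∀ (d : Fin n → ℕ), (∀ i, 0 < d i) →
    ∀ (L : ℤ), 0 < L → ∀ (f : ℤ → ℚ), IsQP L f → ∀ (N : ℤ),
    (∀ s, N ≤ s → f s = (W d s : ℚ)) →
    ((∀ s : ℤ, 0 ≤ s → f s = (W d s : ℚ)) ∧
     (∀ s : ℤ, s ≤ -1 →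
        f s = (-1 : ℚ) ^ (n + 1) * (W d (-s - ∑ i, (d i : ℤ)) : ℚ))) := by
  intro n
  induction n with
  | zero => omega
  | succ n IH =>
    intro _ d hd L hL f hf N hagree
    rcases Nat.eq_zero_or_pos n with hn0 | hn1
    · -- base case : one variable
      subst hn0
      set D : ℤ := (d 0 : ℤ) with hDdef
      have hD1 : 1 ≤ D := by have h : 1 ≤ d 0 := hd 0; rw [hDdef]; exact_mod_cast h
      set g : ℤ → ℚ := fun s => if D ∣ s then (1 : ℚ) else 0 with hg
      have hgs : ∀ s, g s = if D ∣ s then (1 : ℚ) else 0 := fun s => rfl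
      have hfg : ∀ s, f s = g s := by
        have hqpf : IsQP (L * D) f := hf.of_dvd ⟨D, rfl⟩
        have hqpg : IsQP (L * D) g := (isQP_indicator D).of_dvd ⟨L, mul_comm L D⟩
        have hdiff := hqpf.sub hqpg
        have hzero : ∀ s, max N 0 ≤ s → f s - g s = 0 := by
          intro s hs
          have h1 : f s = (W d s : ℚ) := hagree s (le_trans (le_max_left _ _) hs)
          have h2 : W d s = if (d 0 : ℤ) ∣ s ∧ 0 ≤ s then 1 else 0 := W_one d hd s
          have h0s : 0 ≤ s := le_trans (le_max_right _ _) hs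
          rw [h1, h2, hgs s]
          by_cases hdvd : D ∣ s
          · rw [if_pos ⟨hdvd, h0s⟩, if_pos hdvd]; norm_num
          · rw [if_neg (fun h => hdvd h.1), if_neg hdvd]; norm_num
        have := hdiff.eq_zero (by positivity) hzero
        intro s; have hs := this s; linarith [hs]
      constructor
      · intro s hs
        rw [hfg s, W_one d hd s, hgs s]
        by_cases hdvd : D ∣ s
        · rw [if_pos hdvd, if_pos ⟨hdvd, hs⟩]; norm_num
        · rw [if_neg hdvd, if_neg (fun h => hdvd h.1)]; norm_num
      · intro s hs
        have hsum1 : (∑ i : Fin 1, (d i : ℤ)) = D := by simp [hDdef]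
        rw [hfg s, hgs s, hsum1, W_one d hd (-s - D)]
        by_cases hdvd : D ∣ s
        · have hdvd' := hdvd
          obtain ⟨k, hk⟩ := hdvd'
          have hk1 : k ≤ -1 := by nlinarith
          have hge : 0 ≤ -s - D := by nlinarith
          have hdvd2 : D ∣ (-s - D) := ⟨-k - 1, by rw [hk]; ring⟩
          rw [if_pos hdvd, if_pos ⟨hdvd2, hge⟩]; norm_num
        · have hnd : ¬ (D ∣ (-s - D) ∧ 0 ≤ -s - D) := by
            rintro ⟨⟨k, hk⟩, -⟩
            exact hdvd ⟨-k - 1, by linarith [hk]⟩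
          rw [if_neg hdvd, if_neg hnd]; norm_num
    · -- inductive step
      set D : ℤ := (d (Fin.last n) : ℤ) with hDdef
      have hD1 : 1 ≤ D := by have h : 1 ≤ d (Fin.last n) := hd (Fin.last n); rw [hDdef]; exact_mod_cast h
      set d' : Fin n → ℕ := d ∘ Fin.castSucc with hd'def
      have hd' : ∀ i, 0 < d' i := fun i => hd _
      set f' : ℤ → ℚ := fun s => f s - f (s - D) with hf'def
      have hf's : ∀ s, f' s = f s - f (s - D) := fun s => rfl
      have hqpf' : IsQP L f' := hf.sub (hf.shift D)
      -- the recurrence, cast to ℚ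
      have hrecQ : ∀ t : ℤ, (W d t : ℚ) = (W d' t : ℚ) + (W d (t - D) : ℚ) := by
        intro t
        have := W_rec d hd t
        exact_mod_cast this
      have hagree' : ∀ s, N + D ≤ s → f' s = (W d' s : ℚ) := by
        intro s hs
        have h1 : f s = W d s := hagree s (by omega)
        have h2 : f (s - D) = W d (s - D) := hagree _ (by omega)
        rw [hf's s, h1, h2, hrecQ s]
        ring
      obtain ⟨ha', hb'⟩ := IH hn1 d' hd' L hL f' hqpf' (N + D) hagree'
      -- (a) : downward extension of agreement
      have hdown : ∀ (k : ℕ) (s : ℤ), 0 ≤ s → N - k ≤ s → f s = (W d s : ℚ) := by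
        intro k
        induction k with
        | zero => intro s h0 hN; exact hagree s (by omega)
        | succ k ihk =>
          intro s h0 hNk
          by_cases hcase : N - k ≤ s
          · exact ihk s h0 hcase
          · push_neg at hcase
            have e1 : f (s + D) = (W d (s + D) : ℚ) := ihk (s + D) (by omega) (by omega)
            have e2 : f' (s + D) = (W d' (s + D) : ℚ) := ha' (s + D) (by omega)
            have e3 : f s = f (s + D) - f' (s + D) := by
              rw [hf's (s + D)]
              have h4 : s + D - D = s := by ring
              rw [h4]; ring
            rw [e3, e1, e2]
            have := hrecQ (s + D)
            have h4 : s + D - D = s := by ring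
            rw [h4] at this
            linarith [this]
      have ha : ∀ s : ℤ, 0 ≤ s → f s = (W d s : ℚ) := by
        intro s h0
        exact hdown (N - s).toNat s h0 (by omega)
      -- vanishing on [-D, -1]
      have hvan : ∀ u : ℤ, -D ≤ u → u ≤ -1 → f u = 0 := by
        intro u h1 h2
        have e3 : f u = f (u + D) - f' (u + D) := by
          rw [hf's (u + D)]
          have h4 : u + D - D = u := by ring
          rw [h4]; ring
        have e1 : f (u + D) = (W d (u + D) : ℚ) := ha _ (by omega)
        have e2 : f' (u + D) = (W d' (u + D) : ℚ) := ha' _ (by omega)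
        have hrec := hrecQ (u + D)
        have h4 : u + D - D = u := by ring
        rw [h4] at hrec
        have h5 : W d u = 0 := W_neg d (by omega)
        rw [e3, e1, e2, hrec, h5]
        norm_num
      -- sums
      set SG : ℤ := ∑ i : Fin n, (d' i : ℤ) with hSGdef
      have hsum : (∑ i, (d i : ℤ)) = SG + D := by
        rw [hSGdef]
        exact Fin.sum_univ_castSucc (f := fun i => (d i : ℤ))
      have hSG1 : 1 ≤ SG := by
        have h1 : ∀ i : Fin n, (1 : ℤ) ≤ (d' i : ℤ) := fun i => by
          have := hd' i; exact_mod_cast this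
        have h2 : (∑ _i : Fin n, (1 : ℤ)) ≤ ∑ i : Fin n, (d' i : ℤ) :=
          Finset.sum_le_sum (fun i _ => h1 i)
        simp only [Finset.sum_const, Finset.card_univ, Fintype.card_fin, smul_eq_mul,
          nsmul_eq_mul, mul_one] at h2
        omega
      set ε : ℚ := (-1 : ℚ) ^ (n + 1 + 1) with hεdef
      have hεe : (-1 : ℚ) ^ (n + 1) = -ε := by rw [hεdef]; ring
      -- (b) : upward induction on k
      have hup : ∀ (k : ℕ) (s : ℤ), s ≤ -1 → -(k + 1 : ℤ) * D ≤ s →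
          f s = ε * (W d (-s - (SG + D)) : ℚ) := by
        intro k
        induction k with
        | zero =>
          intro s h1 h2
          have h2' : -D ≤ s := by push_cast at h2; linarith
          have hv : f s = 0 := hvan s h2' h1
          have hneg : W d (-s - (SG + D)) = 0 := by
            apply W_neg
            linarith
          rw [hv, hneg]
          norm_num
        | succ k ihk =>
          intro s h1 h2
          by_cases hcase : -((k : ℤ) + 1) * D ≤ s
          · exact ihk s h1 (by linarith)
          · push_neg at hcase
            have hk0 : (0 : ℤ) ≤ (k : ℤ) := by positivity
            have hsD1 : s + D ≤ -1 := by nlinarith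
            have hsD2 : -((k : ℤ) + 1) * D ≤ s + D := by
              push_cast at h2; nlinarith
            have hsD2' : -((k : ℤ) + 1 : ℤ) * D ≤ s + D := hsD2
            replace hsD2 := hsD2'
            have e1 : f (s + D) = ε * (W d (-(s + D) - (SG + D)) : ℚ) := by
              apply ihk (s + D) hsD1
              linarith
            have e2 : f' (s + D) = (-1 : ℚ) ^ (n + 1) * (W d' (-(s + D) - SG) : ℚ) :=
              hb' (s + D) hsD1
            have e3 : f s = f (s + D) - f' (s + D) := by
              rw [hf's (s + D)]
              have h4 : s + D - D = s := by ring
              rw [h4]; ring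
            have harg1 : -(s + D) - (SG + D) = (-s - (SG + D)) - D := by ring
            have harg2 : -(s + D) - SG = -s - (SG + D) := by ring
            rw [e3, e1, e2, harg1, harg2, hεe, hrecQ (-s - (SG + D))]
            ring
      refine ⟨ha, ?_⟩
      intro s hs
      rw [hsum]
      have hK : ((-s).toNat : ℤ) = -s := Int.toNat_of_nonneg (by omega)
      apply hup (-s).toNat s hs
      rw [hK]
      nlinarith

/-- Parity of the Sylvester wave: if `f` is the quasi-polynomial extension of the
restricted partition number `W d` to all integers (with period `lcm d`), then
`V(s) = f(s - ξ)` with `ξ = (∑ d)/2` satisfies `V(s) = (-1)^(m+1) V(-s)`; stated on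
the integers this reads `f s₁ = (-1)^(m+1) f s₂` whenever `s₁ + s₂ + ∑ d = 0`.
In particular, if `m` is even then `V(0) = 0`, i.e. `f t = 0` when `2 t + ∑ d = 0`. -/
theorem stmt6 {m : ℕ} (hm : 1 ≤ m) (d : Fin m → ℕ) (hd : ∀ i, 0 < d i)
    (f : ℤ → ℚ)
    (hagree : ∀ s : ℤ, 0 ≤ s → f s = W d s)
    (c : Fin m → ℤ → ℚ)
    (hper : ∀ j s, c j (s + (((Finset.univ : Finset (Fin m)).lcm d : ℕ) : ℤ)) = c j s)
    (hpoly : ∀ s, f s = ∑ j, c j s * (s : ℚ) ^ (j : ℕ)) :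
    (∀ s₁ s₂ : ℤ, s₁ + s₂ + ∑ i, (d i : ℤ) = 0 → f s₁ = (-1) ^ (m + 1) * f s₂) ∧
    (∀ k : ℕ, m = 2 * k → ∀ t : ℤ, 2 * t + ∑ i, (d i : ℤ) = 0 → f t = 0) := by
  have hL0 : 0 < (((Finset.univ : Finset (Fin m)).lcm d : ℕ) : ℤ) := by
    have hne : (Finset.univ : Finset (Fin m)).lcm d ≠ 0 := by
      rw [Ne, Finset.lcm_eq_zero_iff]
      intro h
      obtain ⟨i, -, hi⟩ := h
      have := hd i
      omega
    omega
  have hqp : IsQP (((Finset.univ : Finset (Fin m)).lcm d : ℕ) : ℤ) f := isQP_of_data c hper hpoly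
  obtain ⟨ha, hb⟩ := key m hm d hd _ hL0 f hqp 0 (fun s hs => hagree s hs)
  have hS1 : 1 ≤ ∑ i, (d i : ℤ) := by
    have h1 : ∀ i : Fin m, (1 : ℤ) ≤ (d i : ℤ) := fun i => by
      have h : 1 ≤ d i := hd i; exact_mod_cast h
    have h2 : (∑ _i : Fin m, (1 : ℤ)) ≤ ∑ i, (d i : ℤ) :=
      Finset.sum_le_sum (fun i _ => h1 i)
    simp only [Finset.sum_const, Finset.card_univ, Fintype.card_fin, smul_eq_mul,
      nsmul_eq_mul, mul_one] at h2
    omega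
  have hsymm : ∀ s₁ s₂ : ℤ, s₁ + s₂ + ∑ i, (d i : ℤ) = 0 →
      f s₁ = (-1 : ℚ) ^ (m + 1) * f s₂ := by
    intro s₁ s₂ h
    rcases le_or_gt 0 s₂ with h2 | h2
    · have hs1 : s₁ ≤ -1 := by linarith
      have harg : -s₁ - ∑ i, (d i : ℤ) = s₂ := by linarith
      rw [hb s₁ hs1, hagree s₂ h2, harg]
    · rcases le_or_gt 0 s₁ with h1 | h1
      · have hs2 : s₂ ≤ -1 := by linarith
        have hb2 := hb s₂ hs2
        have harg : -s₂ - ∑ i, (d i : ℤ) = s₁ := by linarith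
        rw [harg] at hb2
        rw [hb2, hagree s₁ h1]
        have hsq : ((-1 : ℚ)) ^ (m + 1) * ((-1 : ℚ)) ^ (m + 1) = 1 := by
          rw [← pow_add]; exact Even.neg_one_pow ⟨m + 1, by ring⟩
        rw [← mul_assoc, hsq, one_mul]
      · have hb1 := hb s₁ (by omega)
        have hb2 := hb s₂ (by omega)
        have hw1 : W d (-s₁ - ∑ i, (d i : ℤ)) = 0 := W_neg d (by linarith)
        have hw2 : W d (-s₂ - ∑ i, (d i : ℤ)) = 0 := W_neg d (by linarith)
        rw [hb1, hb2, hw1, hw2]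
        norm_num
  refine ⟨hsymm, ?_⟩
  intro k hk t ht
  have hself := hsymm t t (by linarith)
  have hodd : ((-1 : ℚ)) ^ (m + 1) = -1 := Odd.neg_one_pow ⟨k, by omega⟩
  rw [hodd] at hself
  linarith
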